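/- A monotone staircase path polyomino (a sequence of cells starting at the origin where each successive cell is obtained by moving one step East or one step North) is admissible (contains no four cells equally spaced on a line) if and only if the corresponding sequence of moves in {E, N} contains no three consecutive blocks of equal length that are permutations of each other. -/

import Mathlib

open scoped Classical

/-- Two cells of `ℤ²` are adjacent iff they differ by a unit vector. -/
def Adj (p q : ℤ × ℤ) : Prop :=
  (p.1 - q.1).natAbs + (p.2 - q.2).natAbs = 1

/-- A finite set of cells is connected under edge-adjacency. -/
def ConnectedIn (S : Finset (ℤ × ℤ)) : Prop :=
  ∀ p ∈ S, ∀ q ∈ S,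
    Relation.ReflTransGen (fun a b => a ∈ S ∧ b ∈ S ∧ Adj a b) p q

/-- A polyomino: a finite nonempty edge-connected subset of `ℤ²`. -/
def IsPolyomino (S : Finset (ℤ × ℤ)) : Prop :=
  S.Nonempty ∧ ConnectedIn S

/-- Admissible: no four cells equally spaced on a straight line. -/
def Admissible (S : Finset (ℤ × ℤ)) : Prop :=
  ¬ ∃ (p v : ℤ × ℤ), v ≠ 0 ∧ p ∈ S ∧ p + v ∈ S ∧
      p + (2 : ℤ) • v ∈ S ∧ p + (3 : ℤ) • v ∈ S

/-- Degree of a cell in the adjacency graph restricted to `S`. -/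
noncomputable def degIn (S : Finset (ℤ × ℤ)) (p : ℤ × ℤ) : ℕ :=
  (S.filter fun q => Adj p q).card

/-- A path polyomino: either a single cell, or a connected set where every cell
has degree at most 2 and exactly two cells have degree 1. -/
def IsPathPoly (S : Finset (ℤ × ℤ)) : Prop :=
  IsPolyomino S ∧
    (S.card = 1 ∨
      ((∀ p ∈ S, degIn S p ≤ 2) ∧ (S.filter fun p => degIn S p = 1).card = 2))

/-- A loop: a polyomino all of whose cells have degree exactly 2. -/
def IsLoop (S : Finset (ℤ × ℤ)) : Prop :=
  IsPolyomino S ∧ ∀ p ∈ S, degIn S p = 2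

/-- Graph distance within `S` (shortest walk staying in `S`). -/
noncomputable def distIn (S : Finset (ℤ × ℤ)) (p q : ℤ × ℤ) : ℕ :=
  sInf {n | ∃ f : ℕ → ℤ × ℤ, f 0 = p ∧ f n = q ∧ (∀ i ≤ n, f i ∈ S) ∧
    ∀ i < n, Adj (f i) (f (i + 1))}

/-- Graph diameter of `S`. -/
noncomputable def diamIn (S : Finset (ℤ × ℤ)) : ℕ :=
  sSup {d | ∃ p ∈ S, ∃ q ∈ S, distIn S p q = d}

/-- Isometries of the square lattice: bijections of `ℤ²` preserving squared
Euclidean distance (compositions of translations, 90° rotations, reflections). -/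
def IsLatticeIso (f : ℤ × ℤ → ℤ × ℤ) : Prop :=
  Function.Bijective f ∧ ∀ p q : ℤ × ℤ,
    ((f p).1 - (f q).1) ^ 2 + ((f p).2 - (f q).2) ^ 2 =
      (p.1 - q.1) ^ 2 + (p.2 - q.2) ^ 2

/-- Two finite cell sets are equivalent up to a lattice isometry. -/
def IsoEquiv (S T : Finset (ℤ × ℤ)) : Prop :=
  ∃ f, IsLatticeIso f ∧ S.image f = T

/-- Position after `i` steps of the staircase word `w` (`true` = E = (1,0),
`false` = N = (0,1)), starting at the origin. -/
def stairPos (w : List Bool) (i : ℕ) : ℤ × ℤ :=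
  (((w.take i).count true : ℤ), ((w.take i).count false : ℤ))

/-- The set of cells of the monotone staircase path of the word `w`. -/
noncomputable def stairCells (w : List Bool) : Finset (ℤ × ℤ) :=
  (Finset.range (w.length + 1)).image (stairPos w)

/-- `w` contains three consecutive equal-length blocks that are permutations of
each other (an "abelian cube"). -/
def HasAbelianCube (w : List Bool) : Prop :=
  ∃ i k : ℕ, 1 ≤ k ∧ i + 3 * k ≤ w.length ∧
    ((w.drop i).take k).count true = ((w.drop (i + k)).take k).count true ∧
    ((w.drop (i + k)).take k).count true = ((w.drop (i + 2 * k)).take k).count true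

namespace StairAux

/-- Number of `true`s in the first `i` letters. -/
def cnt (w : List Bool) (i : ℕ) : ℕ := (w.take i).count true

lemma count_tf (l : List Bool) : l.count true + l.count false = l.length := by
  induction l with
  | nil => simp
  | cons a l ih => cases a <;> simp [List.count_cons] <;> omega

lemma cnt_add (w : List Bool) (i k : ℕ) :
    cnt w (i + k) = cnt w i + ((w.drop i).take k).count true := by
  rw [cnt, cnt, List.take_add, List.count_append]

lemma stairPos_eq (w : List Bool) {m : ℕ} (hm : m ≤ w.length) :
    stairPos w m = ((cnt w m : ℤ), (m : ℤ) - cnt w m) := by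
  have h2 : ((w.take m).count false : ℤ) = (m : ℤ) - ((w.take m).count true : ℤ) := by
    have h := count_tf (w.take m)
    have hl : (w.take m).length = m := by
      rw [List.length_take]; omega
    omega
  simp [stairPos, cnt, h2]

lemma mem_stairCells {w : List Bool} {q : ℤ × ℤ} :
    q ∈ stairCells w ↔ ∃ m, m ≤ w.length ∧ stairPos w m = q := by
  simp [stairCells, Finset.mem_image, Finset.mem_range, Nat.lt_succ_iff]

lemma bad_iff (w : List Bool) :
    (∃ (p v : ℤ × ℤ), v ≠ 0 ∧ p ∈ stairCells w ∧ p + v ∈ stairCells w ∧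
      p + (2 : ℤ) • v ∈ stairCells w ∧ p + (3 : ℤ) • v ∈ stairCells w)
    ↔ HasAbelianCube w := by
  constructor
  · rintro ⟨p, v, hv, h0, h1, h2, h3⟩
    obtain ⟨m0, hm0, e0⟩ := mem_stairCells.mp h0
    obtain ⟨m1, hm1, e1⟩ := mem_stairCells.mp h1
    obtain ⟨m2, hm2, e2⟩ := mem_stairCells.mp h2
    obtain ⟨m3, hm3, e3⟩ := mem_stairCells.mp h3
    rw [stairPos_eq w hm0] at e0
    rw [stairPos_eq w hm1] at e1
    rw [stairPos_eq w hm2] at e2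
    rw [stairPos_eq w hm3] at e3
    have A0 : (cnt w m0 : ℤ) = p.1 := by rw [← e0]
    have B0 : (m0 : ℤ) - cnt w m0 = p.2 := by rw [← e0]
    have A1 : (cnt w m1 : ℤ) = p.1 + v.1 := by
      have := congrArg Prod.fst e1; simpa using this
    have B1 : (m1 : ℤ) - cnt w m1 = p.2 + v.2 := by
      have := congrArg Prod.snd e1; simpa using this
    have A2 : (cnt w m2 : ℤ) = p.1 + 2 * v.1 := by
      have := congrArg Prod.fst e2; simpa [smul_eq_mul] using this
    have B2 : (m2 : ℤ) - cnt w m2 = p.2 + 2 * v.2 := by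
      have := congrArg Prod.snd e2; simpa [smul_eq_mul] using this
    have A3 : (cnt w m3 : ℤ) = p.1 + 3 * v.1 := by
      have := congrArg Prod.fst e3; simpa [smul_eq_mul] using this
    have B3 : (m3 : ℤ) - cnt w m3 = p.2 + 3 * v.2 := by
      have := congrArg Prod.snd e3; simpa [smul_eq_mul] using this
    rcases lt_trichotomy (v.1 + v.2) 0 with hs | hs | hs
    · -- negative step: cells in decreasing order, base m3
      set k : ℕ := (-(v.1 + v.2)).toNat with hkdef
      have hk : (k : ℤ) = -(v.1 + v.2) := Int.toNat_of_nonneg (by omega)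
      have hk1 : 1 ≤ k := by omega
      have hm2' : m2 = m3 + k := by omega
      have hm1' : m1 = m3 + 2 * k := by omega
      have hm0' : m0 = m3 + 3 * k := by omega
      subst hm2' hm1' hm0'
      have c1 := cnt_add w m3 k
      have c2 := cnt_add w (m3 + k) k
      have c3 := cnt_add w (m3 + 2 * k) k
      rw [show m3 + k + k = m3 + 2 * k by ring] at c2
      rw [show m3 + 2 * k + k = m3 + 3 * k by ring] at c3
      exact ⟨m3, k, hk1, by omega, by omega, by omega⟩
    · -- zero step: all cells coincide, contradicting v ≠ 0
      exfalso
      have hmm : m1 = m0 := by omega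
      subst hmm
      apply hv
      have hv1 : v.1 = 0 := by omega
      have hv2 : v.2 = 0 := by omega
      exact Prod.ext hv1 hv2
    · -- positive step, base m0
      set k : ℕ := (v.1 + v.2).toNat with hkdef
      have hk : (k : ℤ) = v.1 + v.2 := Int.toNat_of_nonneg (by omega)
      have hk1 : 1 ≤ k := by omega
      have hm1' : m1 = m0 + k := by omega
      have hm2' : m2 = m0 + 2 * k := by omega
      have hm3' : m3 = m0 + 3 * k := by omega
      subst hm1' hm2' hm3'
      have c1 := cnt_add w m0 k
      have c2 := cnt_add w (m0 + k) k
      have c3 := cnt_add w (m0 + 2 * k) k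
      rw [show m0 + k + k = m0 + 2 * k by ring] at c2
      rw [show m0 + 2 * k + k = m0 + 3 * k by ring] at c3
      exact ⟨m0, k, hk1, by omega, by omega, by omega⟩
  · rintro ⟨i, k, hk, hlen, h1, h2⟩
    set c : ℕ := ((w.drop i).take k).count true with hc
    have c1 := cnt_add w i k
    have c2 := cnt_add w (i + k) k
    have c3 := cnt_add w (i + 2 * k) k
    rw [show i + k + k = i + 2 * k by ring] at c2
    rw [show i + 2 * k + k = i + 3 * k by ring] at c3
    rw [← hc] at c1
    rw [← h1] at c2
    rw [← h2, ← h1] at c3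
    have hck : c ≤ k := le_trans (List.count_le_length)
      (by simpa using List.length_take_le k (w.drop i))
    refine ⟨stairPos w i, ((c : ℤ), (k : ℤ) - c), ?_, ?_, ?_, ?_, ?_⟩
    · intro h
      rw [Prod.ext_iff] at h
      simp only [Prod.fst_zero, Prod.snd_zero] at h
      omega
    · exact mem_stairCells.mpr ⟨i, by omega, rfl⟩
    · refine mem_stairCells.mpr ⟨i + k, by omega, ?_⟩
      rw [stairPos_eq w (by omega : i + k ≤ w.length),
        stairPos_eq w (by omega : i ≤ w.length)]
      simp only [Prod.mk_add_mk, Prod.mk.injEq]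
      constructor <;> push_cast <;> omega
    · refine mem_stairCells.mpr ⟨i + 2 * k, by omega, ?_⟩
      rw [stairPos_eq w (by omega : i + 2 * k ≤ w.length),
        stairPos_eq w (by omega : i ≤ w.length)]
      simp only [Prod.smul_mk, smul_eq_mul, Prod.mk_add_mk, Prod.mk.injEq]
      constructor <;> push_cast <;> omega
    · refine mem_stairCells.mpr ⟨i + 3 * k, by omega, ?_⟩
      rw [stairPos_eq w (by omega : i + 3 * k ≤ w.length),
        stairPos_eq w (by omega : i ≤ w.length)]
      simp only [Prod.smul_mk, smul_eq_mul, Prod.mk_add_mk, Prod.mk.injEq]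
      constructor <;> push_cast <;> omega

end StairAux

theorem staircase_admissible_iff_abelianCubeFree (w : List Bool) :
    Admissible (stairCells w) ↔ ¬ HasAbelianCube w := by
  unfold Admissible
  exact not_congr (StairAux.bad_iff w)
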